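/- Consider n qubits on the vertices of a graph G = (V,E), a probability distribution {p_e} on E with q_i := (1/2)∑_{e∋i} p_e strictly positive for every vertex i, reset dissipators D_i(ρ) = Tr_i(ρ) ⊗ W_i with W_i = (1/2)(1 + λ_i Z), λ_i ∈ [0,1), two-qubit channels F_e acting only on the endpoints of e, and the super-operators E_0(ρ) = ∑_i q_i D_i(ρ), E_1(ρ) = ∑_e p_e F_e(ρ) − E_0(ρ), ρ_0 = ⊗_i W_i, K(ρ) = ρ − E_0(ρ) + Tr(ρ)·ρ_0, and T = E_1* ∘ (K*)⁻¹. Then for every k ≥ 0 and every operator O ∈ S_k (the span of dual Wauli operators Q̃_α with |α| ≤ k), the operator T(O) lies in S_{k+1}; moreover the support of T(O) is contained in the ball of radius 1 (in the graph metric of G) around the support of O. -/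

import Mathlib

namespace SSP

noncomputable section

open Matrix
open scoped ComplexOrder

/-- Computational basis labels for `n` qubits. -/
abbrev Idx (n : ℕ) := Fin n → Fin 2

/-- Operators (matrices) on the Hilbert space of `n` qubits. -/
abbrev Op (n : ℕ) := Matrix (Idx n) (Idx n) ℂ

/-- Super-operators on `n` qubits. -/
abbrev SOp (n : ℕ) := Op n →ₗ[ℂ] Op n

/-- The operator norm (largest singular value) of a complex matrix. -/
noncomputable def opNorm {m : Type*} [Fintype m] [DecidableEq m]
    (M : Matrix m m ℂ) : ℝ :=
  ‖Matrix.toEuclideanCLM (𝕜 := ℂ) M‖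

/-- A density matrix: positive semidefinite with unit trace. -/
def IsDensity {n : ℕ} (ρ : Op n) : Prop := ρ.PosSemidef ∧ ρ.trace = 1

/-- An operator is supported on the set `S` of qubits if it has the form
`Ô_S ⊗ 1` on the remaining qubits. -/
def SupportedOn {n : ℕ} (S : Set (Fin n)) (M : Op n) : Prop :=
  (∀ x y : Idx n, (∃ i ∉ S, x i ≠ y i) → M x y = 0) ∧
  (∀ x y x' y' : Idx n,
      (∀ i ∈ S, x i = x' i) → (∀ i ∈ S, y i = y' i) →
      (∀ i ∉ S, x i = y i) → (∀ i ∉ S, x' i = y' i) → M x y = M x' y')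

/-- The support of an operator: the smallest set of qubits supporting it
(the intersection of all supporting sets). -/
def suppOp {n : ℕ} (M : Op n) : Set (Fin n) :=
  {i | ∀ S : Set (Fin n), SupportedOn S M → i ∈ S}

/-- `E` is a quantum channel (CPTP map) acting only on the qubits in `S`:
it has a Kraus representation whose Kraus operators are all supported on `S`. -/
def IsChannelOn {n : ℕ} (S : Set (Fin n)) (E : SOp n) : Prop :=
  ∃ (m : ℕ) (F : Fin m → Op n),
    (∀ j, SupportedOn S (F j)) ∧
    (∑ j, (F j)ᴴ * F j = 1) ∧
    (∀ ρ, E ρ = ∑ j, F j * ρ * (F j)ᴴ)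

/-- A quantum channel on the whole system. -/
def IsChannel {n : ℕ} (E : SOp n) : Prop := IsChannelOn Set.univ E

/-- `Estar` is the adjoint of `E` with respect to the Hilbert–Schmidt
inner product `⟨A,B⟩ = Tr(A†B)`. -/
def IsHSAdjoint {n : ℕ} (E Estar : SOp n) : Prop :=
  ∀ A B : Op n, ((Estar A)ᴴ * B).trace = (Aᴴ * (E B)).trace

/-- An ergodic channel: it has a unique fixed point among density matrices,
this fixed point is full rank (positive definite), and there is no other
eigenvalue of modulus one. -/
def IsErgodic {n : ℕ} (E : SOp n) : Prop :=
  (∃ σ : Op n, IsDensity σ ∧ σ.PosDef ∧ E σ = σ ∧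
      ∀ ρ : Op n, IsDensity ρ → E ρ = ρ → ρ = σ) ∧
  (∀ μ : ℂ, Module.End.HasEigenvalue (E : Module.End ℂ (Op n)) μ → μ = 1 ∨ ‖μ‖ < 1)

/-- The set of qubits (endpoints) of an edge. -/
def edgeQubits {n : ℕ} (e : Sym2 (Fin n)) : Set (Fin n) := {i | i ∈ e}

/-- Finset of endpoints of an edge. -/
def edgeFinset' {n : ℕ} (e : Sym2 (Fin n)) : Finset (Fin n) :=
  Finset.univ.filter (· ∈ e)

/-- A Hamiltonian is geometrically `k`-local w.r.t. the graph `G`: it is a sum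
of Hermitian terms, each supported on a connected subset of `G` with at most
`k` vertices. -/
def GeomLocal {n : ℕ} (G : SimpleGraph (Fin n)) (k : ℕ) (H : Op n) : Prop :=
  ∃ (m : ℕ) (h : Fin m → Op n) (S : Fin m → Set (Fin n)),
    H = ∑ j, h j ∧
    ∀ j, (h j).IsHermitian ∧ SupportedOn (S j) (h j) ∧
      (S j).ncard ≤ k ∧ (G.induce (S j)).Preconnected

/-- The ball of radius `k` around a set of vertices, in the graph metric. -/
def Ball {n : ℕ} (G : SimpleGraph (Fin n)) (X : Set (Fin n)) (k : ℕ) :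
    Set (Fin n) :=
  {v | ∃ u ∈ X, ∃ w : G.Walk u v, w.length ≤ k}

/- Pauli matrices and the Wauli bases. -/
def PX : Matrix (Fin 2) (Fin 2) ℂ := !![0, 1; 1, 0]
def PY : Matrix (Fin 2) (Fin 2) ℂ := !![0, -Complex.I; Complex.I, 0]
def PZ : Matrix (Fin 2) (Fin 2) ℂ := !![1, 0; 0, -1]

/-- `W = (1/2)(1 + λ Z)`. -/
noncomputable def Wmat (l : ℝ) : Matrix (Fin 2) (Fin 2) ℂ :=
  (2⁻¹ : ℂ) • (1 + (l : ℂ) • PZ)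

/-- Single-qubit Wauli basis `{W, X/2, Y/2, Z/2}`. -/
noncomputable def wauli (l : ℝ) : Fin 4 → Matrix (Fin 2) (Fin 2) ℂ :=
  ![Wmat l, (2⁻¹ : ℂ) • PX, (2⁻¹ : ℂ) • PY, (2⁻¹ : ℂ) • PZ]

/-- Single-qubit dual Wauli basis `{1, X, Y, Z - λ·1}`. -/
noncomputable def dualWauli (l : ℝ) : Fin 4 → Matrix (Fin 2) (Fin 2) ℂ :=
  ![1, PX, PY, PZ - (l : ℂ) • 1]

/-- The `n`-qubit Wauli basis element `Q_α` (tensor product of the `Q_{α_i}`). -/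
noncomputable def Qmat {n : ℕ} (lam : Fin n → ℝ) (α : Fin n → Fin 4) : Op n :=
  Matrix.of fun x y => ∏ i, wauli (lam i) (α i) (x i) (y i)

/-- The `n`-qubit dual Wauli basis element `Q̃_α`. -/
noncomputable def Qdual {n : ℕ} (lam : Fin n → ℝ) (α : Fin n → Fin 4) : Op n :=
  Matrix.of fun x y => ∏ i, dualWauli (lam i) (α i) (x i) (y i)

/-- The support of a Wauli string. -/
def suppStr {n : ℕ} (α : Fin n → Fin 4) : Finset (Fin n) :=
  Finset.univ.filter (fun i => α i ≠ 0)

/-- The coefficient `c_α = Tr(Q_α O)` of the expansion `O = ∑_α c_α Q̃_α`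
in the dual Wauli basis. -/
noncomputable def QCoeff {n : ℕ} (lam : Fin n → ℝ) (O : Op n)
    (α : Fin n → Fin 4) : ℂ :=
  (Qmat lam α * O).trace

/-- The `Q1` norm: the `ℓ¹` norm of the dual-Wauli coefficient vector. -/
noncomputable def Q1Norm {n : ℕ} (lam : Fin n → ℝ) (O : Op n) : ℝ :=
  ∑ α : Fin n → Fin 4, ‖QCoeff lam O α‖

/-- The subspace `S_k`: the span of the dual Wauli operators `Q̃_α` with
`|α| ≤ k`. -/
def Sk {n : ℕ} (lam : Fin n → ℝ) (k : ℕ) : Submodule ℂ (Op n) :=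
  Submodule.span ℂ {Q | ∃ α : Fin n → Fin 4, (suppStr α).card ≤ k ∧ Q = Qdual lam α}

/-- The trace norm `Tr √(O†O)` of a matrix. -/
noncomputable def traceNorm {m : Type*} [Fintype m] [DecidableEq m]
    (M : Matrix m m ℂ) : ℝ :=
  (((Matrix.posSemidef_conjTranspose_mul_self M).1.eigenvectorUnitary.1 *
      Matrix.diagonal (((↑) : ℝ → ℂ) ∘ (√·) ∘ (Matrix.posSemidef_conjTranspose_mul_self M).1.eigenvalues) *
      (star (Matrix.posSemidef_conjTranspose_mul_self M).1.eigenvectorUnitary : Matrix m m ℂ)).trace).re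


variable {n : ℕ}

lemma wauli_diag_sum (l : ℝ) (c : Fin 4) :
    (∑ b : Fin 2, wauli l c b b) = if c = 0 then 1 else 0 := by
  fin_cases c <;>
    simp [wauli, Wmat, PX, PY, PZ, Fin.sum_univ_two, Matrix.one_apply] <;> ring

lemma wauli_pairing (l : ℝ) (a b : Fin 4) :
    (∑ x : Fin 2, ∑ y : Fin 2, wauli l a x y * dualWauli l b y x)
      = if a = b then 1 else 0 := by
  fin_cases a <;> fin_cases b <;>
    simp [wauli, dualWauli, Wmat, PX, PY, PZ, Fin.sum_univ_two, Matrix.one_apply,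
      Complex.I_sq] <;> ring_nf <;> simp [Complex.I_sq] <;> ring

lemma wauli_herm (l : ℝ) (a : Fin 4) (x y : Fin 2) :
    (starRingEnd ℂ) (wauli l a y x) = wauli l a x y := by
  fin_cases a <;> fin_cases x <;> fin_cases y <;>
    simp [wauli, Wmat, PX, PY, PZ, Matrix.one_apply, map_ofNat]

lemma dualWauli_herm (l : ℝ) (a : Fin 4) (x y : Fin 2) :
    (starRingEnd ℂ) (dualWauli l a y x) = dualWauli l a x y := by
  fin_cases a <;> fin_cases x <;> fin_cases y <;>
    simp [dualWauli, PX, PY, PZ, Matrix.one_apply, map_ofNat]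
lemma prodMat_trace_mul (f g : Fin n → Matrix (Fin 2) (Fin 2) ℂ) :
    ((Matrix.of fun x y : Idx n => ∏ i, f i (x i) (y i)) *
      (Matrix.of fun x y : Idx n => ∏ i, g i (x i) (y i))).trace
      = ∏ i, ∑ a : Fin 2, ∑ b : Fin 2, f i a b * g i b a := by
  classical
  rw [Matrix.trace]
  simp only [Matrix.diag_apply, Matrix.mul_apply, Matrix.of_apply]
  calc ∑ x : Idx n, ∑ y : Idx n, (∏ i, f i (x i) (y i)) * ∏ i, g i (y i) (x i)
      = ∑ x : Idx n, ∑ y : Idx n, ∏ i, (f i (x i) (y i) * g i (y i) (x i)) := by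
        simp [Finset.prod_mul_distrib]
    _ = ∑ x : Idx n, ∏ i, ∑ b : Fin 2, f i (x i) b * g i b (x i) := by
        refine Finset.sum_congr rfl fun x _ => ?_
        exact (Fintype.prod_sum (fun i b => f i (x i) b * g i b (x i))).symm
    _ = ∏ i, ∑ a : Fin 2, ∑ b : Fin 2, f i a b * g i b a :=
        (Fintype.prod_sum (fun i a => ∑ b : Fin 2, f i a b * g i b a)).symm

lemma Qmat_mul_Qdual_trace (lam : Fin n → ℝ) (α β : Fin n → Fin 4) :
    (Qmat lam α * Qdual lam β).trace = if α = β then 1 else 0 := by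
  rw [Qmat, Qdual, prodMat_trace_mul]
  simp only [wauli_pairing]
  rw [Finset.prod_boole]
  simp [funext_iff]

lemma Qmat_trace (lam : Fin n → ℝ) (β : Fin n → Fin 4) :
    (Qmat lam β).trace = if β = 0 then 1 else 0 := by
  classical
  rw [Matrix.trace]
  simp only [Matrix.diag_apply, Qmat, Matrix.of_apply]
  rw [show (∑ x : Idx n, ∏ i, wauli (lam i) (β i) (x i) (x i))
      = ∏ i, ∑ b : Fin 2, wauli (lam i) (β i) b b from
      (Fintype.prod_sum (fun i b => wauli (lam i) (β i) b b)).symm]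
  simp only [wauli_diag_sum]
  rw [Finset.prod_boole]
  simp [funext_iff]

lemma Qdual_herm (lam : Fin n → ℝ) (α : Fin n → Fin 4) :
    (Qdual lam α)ᴴ = Qdual lam α := by
  ext x y
  simp only [Matrix.conjTranspose_apply, Qdual, Matrix.of_apply, ← starRingEnd_apply, map_prod]
  exact Finset.prod_congr rfl fun i _ => dualWauli_herm (lam i) (α i) (x i) (y i)

lemma Qmat_herm (lam : Fin n → ℝ) (α : Fin n → Fin 4) :
    (Qmat lam α)ᴴ = Qmat lam α := by
  ext x y
  simp only [Matrix.conjTranspose_apply, Qmat, Matrix.of_apply, ← starRingEnd_apply, map_prod]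
  exact Finset.prod_congr rfl fun i _ => wauli_herm (lam i) (α i) (x i) (y i)

lemma QCoeff_smul (lam : Fin n → ℝ) (c : ℂ) (M : Op n) (α : Fin n → Fin 4) :
    QCoeff lam (c • M) α = c * QCoeff lam M α := by
  simp [QCoeff, Matrix.mul_smul]

lemma QCoeff_add (lam : Fin n → ℝ) (M N : Op n) (α : Fin n → Fin 4) :
    QCoeff lam (M + N) α = QCoeff lam M α + QCoeff lam N α := by
  simp [QCoeff, Matrix.mul_add]

lemma QCoeff_sum {ι : Type*} (s : Finset ι) (lam : Fin n → ℝ) (M : ι → Op n)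
    (α : Fin n → Fin 4) :
    QCoeff lam (∑ j ∈ s, M j) α = ∑ j ∈ s, QCoeff lam (M j) α := by
  simp [QCoeff, Matrix.mul_sum]

lemma QCoeff_Qdual (lam : Fin n → ℝ) (α β : Fin n → Fin 4) :
    QCoeff lam (Qdual lam β) α = if α = β then 1 else 0 :=
  Qmat_mul_Qdual_trace lam α β

lemma qdual_linearIndependent (lam : Fin n → ℝ) :
    LinearIndependent ℂ (Qdual lam (n := n)) := by
  rw [Fintype.linearIndependent_iff]
  intro c hc β
  have h := congrArg (fun M => (Qmat lam β * M).trace) hc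
  simpa [Matrix.mul_sum, Matrix.mul_smul, Qmat_mul_Qdual_trace] using h

lemma card_eq_finrank_op :
    Fintype.card (Fin n → Fin 4) = Module.finrank ℂ (Op n) := by
  rw [Module.finrank_matrix]
  simp [Fintype.card_fun, ← mul_pow]

noncomputable def qdualBasis (lam : Fin n → ℝ) : Module.Basis (Fin n → Fin 4) ℂ (Op n) :=
  basisOfLinearIndependentOfCardEqFinrank (qdual_linearIndependent lam) card_eq_finrank_op

lemma qdual_expansion (lam : Fin n → ℝ) (M : Op n) :
    M = ∑ α : Fin n → Fin 4, QCoeff lam M α • Qdual lam α := by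
  classical
  have hb : ⇑(qdualBasis (n := n) lam) = Qdual lam :=
    coe_basisOfLinearIndependentOfCardEqFinrank _ _
  have h := (qdualBasis (n := n) lam).sum_repr M
  rw [hb] at h
  have hco : ∀ β, QCoeff lam M β = (qdualBasis (n := n) lam).repr M β := by
    intro β
    conv_lhs => rw [← h]
    rw [QCoeff_sum]
    simp [QCoeff_smul, QCoeff_Qdual]
  conv_lhs => rw [← h]
  exact Finset.sum_congr rfl fun α _ => by rw [hco]
lemma fin2_add_one_ne (b : Fin 2) : b + 1 ≠ b := by fin_cases b <;> decide

lemma fin2_add_one_add_one (b : Fin 2) : b + 1 + 1 = b := by fin_cases b <;> decide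

lemma supportedOn_zero {S : Set (Fin n)} : SupportedOn S (0 : Op n) :=
  ⟨fun _ _ _ => rfl, fun _ _ _ _ _ _ _ _ => rfl⟩

lemma SupportedOn.smul {S : Set (Fin n)} {M : Op n} (h : SupportedOn S M) (c : ℂ) :
    SupportedOn S (c • M) := by
  refine ⟨fun x y hxy => ?_, fun x y x' y' h1 h2 h3 h4 => ?_⟩
  · simp [Matrix.smul_apply, h.1 x y hxy]
  · simp [Matrix.smul_apply, h.2 x y x' y' h1 h2 h3 h4]

lemma SupportedOn.add {S : Set (Fin n)} {M N : Op n}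
    (hM : SupportedOn S M) (hN : SupportedOn S N) : SupportedOn S (M + N) := by
  refine ⟨fun x y hxy => ?_, fun x y x' y' h1 h2 h3 h4 => ?_⟩
  · simp [Matrix.add_apply, hM.1 x y hxy, hN.1 x y hxy]
  · simp [Matrix.add_apply, hM.2 x y x' y' h1 h2 h3 h4, hN.2 x y x' y' h1 h2 h3 h4]

lemma supportedOn_sum {ι : Type*} {s : Finset ι} {S : Set (Fin n)} {M : ι → Op n}
    (h : ∀ j ∈ s, SupportedOn S (M j)) : SupportedOn S (∑ j ∈ s, M j) := by
  classical
  induction s using Finset.induction_on with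
  | empty => simpa using supportedOn_zero
  | insert _ _ hne ih =>
      rw [Finset.sum_insert hne]
      exact (h _ (Finset.mem_insert_self _ _)).add
        (ih fun j hj => h j (Finset.mem_insert_of_mem hj))

lemma SupportedOn.conjTranspose {S : Set (Fin n)} {M : Op n} (h : SupportedOn S M) :
    SupportedOn S Mᴴ := by
  refine ⟨fun x y ⟨i, hiS, hixy⟩ => ?_, fun x y x' y' h1 h2 h3 h4 => ?_⟩
  · rw [Matrix.conjTranspose_apply, h.1 y x ⟨i, hiS, fun hh => hixy hh.symm⟩, star_zero]
  · rw [Matrix.conjTranspose_apply, Matrix.conjTranspose_apply,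
      h.2 y x y' x' h2 h1 (fun i hi => (h3 i hi).symm) (fun i hi => (h4 i hi).symm)]

lemma SupportedOn.mono {S S' : Set (Fin n)} {M : Op n} (h : SupportedOn S M)
    (hSS : S ⊆ S') : SupportedOn S' M := by
  classical
  refine ⟨fun x y ⟨i, hiS, hixy⟩ => h.1 x y ⟨i, fun hc => hiS (hSS hc), hixy⟩,
    fun x y x' y' h1 h2 h3 h4 => ?_⟩
  by_cases hd : ∃ i, i ∈ S' ∧ i ∉ S ∧ x i ≠ y i
  · obtain ⟨i, hiS', hiS, hixy⟩ := hd
    rw [h.1 x y ⟨i, hiS, hixy⟩, h.1 x' y' ⟨i, hiS, ?_⟩]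
    rw [← h1 i hiS', ← h2 i hiS']; exact hixy
  · push_neg at hd
    refine h.2 x y x' y' (fun i hi => h1 i (hSS hi)) (fun i hi => h2 i (hSS hi))
      (fun i hi => ?_) (fun i hi => ?_)
    · by_cases hi' : i ∈ S'
      · exact hd i hi' hi
      · exact h3 i hi'
    · by_cases hi' : i ∈ S'
      · rw [← h1 i hi', ← h2 i hi']; exact hd i hi' hi
      · exact h4 i hi'

lemma SupportedOn.mul {S : Set (Fin n)} {A B : Op n}
    (hA : SupportedOn S A) (hB : SupportedOn S B) : SupportedOn S (A * B) := by
  classical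
  constructor
  · rintro x y ⟨i, hiS, hixy⟩
    rw [Matrix.mul_apply]
    refine Finset.sum_eq_zero fun z _ => ?_
    by_cases hz : z i = x i
    · exact mul_eq_zero_of_right _ (hB.1 z y ⟨i, hiS, by rw [hz]; exact hixy⟩)
    · exact mul_eq_zero_of_left (hA.1 x z ⟨i, hiS, fun h => hz h.symm⟩) _
  · intro x y x' y' h1 h2 h3 h4
    rw [Matrix.mul_apply, Matrix.mul_apply]
    have e1 : ∑ z : Idx n, A x z * B z y
        = ∑ z ∈ Finset.univ.filter (fun z : Idx n => ∀ i, i ∉ S → z i = x i),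
            A x z * B z y := by
      refine (Finset.sum_filter_of_ne fun z _ hz i hiS => ?_).symm
      by_contra hzi
      exact hz (mul_eq_zero_of_left (hA.1 x z ⟨i, hiS, fun h => hzi h.symm⟩) _)
    have e2 : ∑ z : Idx n, A x' z * B z y'
        = ∑ z ∈ Finset.univ.filter (fun z : Idx n => ∀ i, i ∉ S → z i = x' i),
            A x' z * B z y' := by
      refine (Finset.sum_filter_of_ne fun z _ hz i hiS => ?_).symm
      by_contra hzi
      exact hz (mul_eq_zero_of_left (hA.1 x' z ⟨i, hiS, fun h => hzi h.symm⟩) _)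
    rw [e1, e2]
    refine Finset.sum_nbij' (fun z => fun i => if i ∈ S then z i else x' i)
      (fun z => fun i => if i ∈ S then z i else x i) ?_ ?_ ?_ ?_ ?_
    · intro z _
      simp only [Finset.mem_filter, Finset.mem_univ, true_and]
      intro i hiS; simp [if_neg hiS]
    · intro z _
      simp only [Finset.mem_filter, Finset.mem_univ, true_and]
      intro i hiS; simp [if_neg hiS]
    · intro z hz
      simp only [Finset.mem_filter, Finset.mem_univ, true_and] at hz
      funext i
      by_cases hiS : i ∈ S <;> simp [hiS, hz i]
    · intro z hz
      simp only [Finset.mem_filter, Finset.mem_univ, true_and] at hz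
      funext i
      by_cases hiS : i ∈ S <;> simp [hiS, hz i]
    · intro z hz
      simp only [Finset.mem_filter, Finset.mem_univ, true_and] at hz
      have hAz : A x z = A x' (fun i => if i ∈ S then z i else x' i) :=
        hA.2 x z x' _ h1 (fun i hi => by simp [if_pos hi]) (fun i hi => (hz i hi).symm)
          (fun i hi => by simp [if_neg hi])
      have hBz : B z y = B (fun i => if i ∈ S then z i else x' i) y' :=
        hB.2 z y _ y' (fun i hi => by simp [if_pos hi]) h2
          (fun i hi => by rw [hz i hi]; exact h3 i hi)
          (fun i hi => by simp [if_neg hi, h4 i hi])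
      rw [hAz, hBz]

lemma supportedOn_comm {S T : Set (Fin n)} {A B : Op n}
    (hA : SupportedOn S A) (hB : SupportedOn T B)
    (hd : ∀ i, i ∈ S → i ∉ T) : A * B = B * A := by
  classical
  ext x y
  rw [Matrix.mul_apply, Matrix.mul_apply]
  by_cases hmain : ∀ j, j ∉ S → j ∉ T → x j = y j
  · have key1 : ∀ z : Idx n, z ≠ (fun i => if i ∈ S then y i else x i) →
        A x z * B z y = 0 := by
      intro z hz
      have : ∃ i, z i ≠ (if i ∈ S then y i else x i) := by
        by_contra hc; push_neg at hc; exact hz (funext hc)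
      obtain ⟨i, hi⟩ := this
      by_cases hiS : i ∈ S
      · rw [if_pos hiS] at hi
        exact mul_eq_zero_of_right _ (hB.1 z y ⟨i, hd i hiS, hi⟩)
      · rw [if_neg hiS] at hi
        exact mul_eq_zero_of_left (hA.1 x z ⟨i, hiS, fun h => hi h.symm⟩) _
    have key2 : ∀ z : Idx n, z ≠ (fun i => if i ∈ T then y i else x i) →
        B x z * A z y = 0 := by
      intro z hz
      have : ∃ i, z i ≠ (if i ∈ T then y i else x i) := by
        by_contra hc; push_neg at hc; exact hz (funext hc)
      obtain ⟨i, hi⟩ := this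
      by_cases hiT : i ∈ T
      · rw [if_pos hiT] at hi
        have hiS : i ∉ S := fun hc => hd i hc hiT
        exact mul_eq_zero_of_right _ (hA.1 z y ⟨i, hiS, hi⟩)
      · rw [if_neg hiT] at hi
        exact mul_eq_zero_of_left (hB.1 x z ⟨i, hiT, fun h => hi h.symm⟩) _
    rw [Finset.sum_eq_single_of_mem _ (Finset.mem_univ _) (fun z _ hz => key1 z hz),
      Finset.sum_eq_single_of_mem _ (Finset.mem_univ _) (fun z _ hz => key2 z hz)]
    have hAeq : A x (fun i => if i ∈ S then y i else x i)
        = A (fun i => if i ∈ T then y i else x i) y := by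
      refine hA.2 _ _ _ _ (fun i hi => by simp [if_neg (hd i hi)]) (fun i hi => by simp [if_pos hi])
        (fun i hi => by simp [if_neg hi]) (fun i hi => ?_)
      by_cases hiT : i ∈ T
      · simp [if_pos hiT]
      · simp [if_neg hiT, hmain i hi hiT]
    have hBeq : B (fun i => if i ∈ S then y i else x i) y
        = B x (fun i => if i ∈ T then y i else x i) := by
      refine hB.2 _ _ _ _ (fun i hi => by simp [if_neg (fun hc => hd i hc hi)])
        (fun i hi => by simp [if_pos hi]) (fun i hi => ?_) (fun i hi => by simp [if_neg hi])
      by_cases hiS : i ∈ S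
      · simp [if_pos hiS]
      · simp [if_neg hiS, hmain i hiS hi]
    rw [hAeq, hBeq, mul_comm]
  · push_neg at hmain
    obtain ⟨j, hjS, hjT, hjxy⟩ := hmain
    rw [Finset.sum_eq_zero, Finset.sum_eq_zero]
    · intro z _
      by_cases hz : z j = x j
      · exact mul_eq_zero_of_right _ (hA.1 z y ⟨j, hjS, by rw [hz]; exact hjxy⟩)
      · exact mul_eq_zero_of_left (hB.1 x z ⟨j, hjT, fun h => hz h.symm⟩) _
    · intro z _
      by_cases hz : z j = x j
      · exact mul_eq_zero_of_right _ (hB.1 z y ⟨j, hjT, by rw [hz]; exact hjxy⟩)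
      · exact mul_eq_zero_of_left (hA.1 x z ⟨j, hjS, fun h => hz h.symm⟩) _

lemma mem_suppStr {β : Fin n → Fin 4} {i : Fin n} : i ∈ suppStr β ↔ β i ≠ 0 := by
  simp [suppStr]

lemma supportedOn_Qdual (lam : Fin n → ℝ) (α : Fin n → Fin 4) :
    SupportedOn (↑(suppStr α)) (Qdual lam α) := by
  constructor
  · rintro x y ⟨i, hiS, hixy⟩
    have hαi : α i = 0 := by
      by_contra hc; exact hiS (by simpa [mem_suppStr] using hc)
    show (∏ j, dualWauli (lam j) (α j) (x j) (y j)) = 0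
    refine Finset.prod_eq_zero (Finset.mem_univ i) ?_
    rw [hαi]
    simp [dualWauli, Matrix.one_apply, hixy]
  · intro x y x' y' h1 h2 h3 h4
    show (∏ j, dualWauli (lam j) (α j) (x j) (y j))
      = ∏ j, dualWauli (lam j) (α j) (x' j) (y' j)
    refine Finset.prod_congr rfl fun i _ => ?_
    by_cases hi : i ∈ suppStr α
    · rw [h1 i hi, h2 i hi]
    · have hαi : α i = 0 := by by_contra hc; exact hi (mem_suppStr.mpr hc)
      have hxy := h3 i (by simpa using hi)
      have hxy' := h4 i (by simpa using hi)
      rw [hαi]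
      simp [dualWauli, Matrix.one_apply, hxy, hxy']
lemma supportedOn_coeff_eq_zero {S : Set (Fin n)} {M : Op n} (lam : Fin n → ℝ)
    (hM : SupportedOn S M) {β : Fin n → Fin 4} (hβ : ¬ (↑(suppStr β) : Set (Fin n)) ⊆ S) :
    QCoeff lam M β = 0 := by
  classical
  obtain ⟨i, hiβ, hiS⟩ := Set.not_subset.mp hβ
  have hβi : β i ≠ 0 := mem_suppStr.mp (by simpa using hiβ)
  rw [QCoeff, Matrix.trace]
  simp only [Matrix.diag_apply, Matrix.mul_apply, Qmat, Matrix.of_apply]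
  rw [← Finset.sum_product']
  refine Finset.sum_ninvolution
    (fun p => (Function.update p.1 i (p.1 i + 1), Function.update p.2 i (p.2 i + 1)))
    ?_ ?_ (fun _ => Finset.mem_univ _) ?_
  · -- f a + f (g a) = 0
    rintro ⟨x, z⟩
    simp only
    by_cases hcase : ∀ j, j ∉ S → z j = x j
    · have hzx : z i = x i := hcase i hiS
      have hM2 : M z x = M (Function.update z i (z i + 1)) (Function.update x i (x i + 1)) := by
        refine hM.2 z x _ _ (fun j hj => ?_) (fun j hj => ?_) (fun j hj => hcase j hj) (fun j hj => ?_)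
        · rw [Function.update_of_ne (by rintro rfl; exact hiS hj)]
        · rw [Function.update_of_ne (by rintro rfl; exact hiS hj)]
        · by_cases hji : j = i
          · subst hji; simp [hzx]
          · simp [Function.update_of_ne hji, hcase j hj]
      rw [Fintype.prod_eq_mul_prod_compl i (fun j => wauli (lam j) (β j) (x j) (z j)),
        Fintype.prod_eq_mul_prod_compl i
          (fun j => wauli (lam j) (β j) (Function.update x i (x i + 1) j)
            (Function.update z i (z i + 1) j))]
      have hrest : (∏ j ∈ {i}ᶜ, wauli (lam j) (β j) (Function.update x i (x i + 1) j)
            (Function.update z i (z i + 1) j))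
          = ∏ j ∈ {i}ᶜ, wauli (lam j) (β j) (x j) (z j) := by
        refine Finset.prod_congr rfl fun j hj => ?_
        have hji : j ≠ i := by simpa using hj
        rw [Function.update_of_ne hji, Function.update_of_ne hji]
      rw [hrest, Function.update_self, Function.update_self, ← hM2, hzx]
      have hw : wauli (lam i) (β i) (x i) (x i) + wauli (lam i) (β i) (x i + 1) (x i + 1) = 0 := by
        have h2 := wauli_diag_sum (lam i) (β i)
        rw [if_neg hβi, Fin.sum_univ_two] at h2
        have hcases : x i = 0 ∨ x i = 1 := by omega
        rcases hcases with hb | hb <;> rw [hb]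
        · simpa using h2
        · rw [show (1 : Fin 2) + 1 = 0 from rfl, add_comm]; exact h2
      set R := ∏ j ∈ {i}ᶜ, wauli (lam j) (β j) (x j) (z j)
      linear_combination M z x * R * hw
    · have h0 : M z x = 0 := by
        refine hM.1 z x ?_
        simp only [not_forall] at hcase
        obtain ⟨j, hjS, hjzx⟩ := hcase
        exact ⟨j, hjS, hjzx⟩
      have h0' : M (Function.update z i (z i + 1)) (Function.update x i (x i + 1)) = 0 := by
        refine hM.1 _ _ ?_
        simp only [not_forall] at hcase
        obtain ⟨j, hjS, hjzx⟩ := hcase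
        refine ⟨j, hjS, ?_⟩
        by_cases hji : j = i
        · subst hji
          simp only [Function.update_self]
          intro hc
          exact hjzx (by
            have := congrArg (fun b => b + 1) hc
            simpa [fin2_add_one_add_one] using this)
        · simpa [Function.update_of_ne hji] using hjzx
      simp only [h0, h0', mul_zero, add_zero]
  · -- g a ≠ a when f a ≠ 0
    rintro ⟨x, z⟩ _
    intro hc
    have := congrArg (fun p => p.1 i) hc
    simp only [Function.update_self] at this
    exact fin2_add_one_ne (x i) this
  · rintro ⟨x, z⟩
    simp only [Prod.mk.injEq]
    constructor <;>
    · funext j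
      by_cases hji : j = i
      · subst hji; simp [fin2_add_one_add_one]
      · simp [Function.update_of_ne hji]

lemma supportedOn_of_coeff (lam : Fin n → ℝ) {S : Set (Fin n)} {M : Op n}
    (h : ∀ β, QCoeff lam M β ≠ 0 → (↑(suppStr β) : Set (Fin n)) ⊆ S) :
    SupportedOn S M := by
  rw [qdual_expansion lam M]
  refine supportedOn_sum fun β _ => ?_
  by_cases hc : QCoeff lam M β = 0
  · rw [hc, zero_smul]; exact supportedOn_zero
  · exact ((supportedOn_Qdual lam β).mono (h β hc)).smul _

lemma suppStr_subset_suppOp (lam : Fin n → ℝ) {M : Op n} {β : Fin n → Fin 4}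
    (h : QCoeff lam M β ≠ 0) : (↑(suppStr β) : Set (Fin n)) ⊆ suppOp M := by
  intro i hi
  intro S hS
  by_contra hiS
  exact h (supportedOn_coeff_eq_zero lam hS (fun hc => hiS (hc hi)))

lemma suppOp_subset {S : Set (Fin n)} {M : Op n} (h : SupportedOn S M) :
    suppOp M ⊆ S := fun _ hi => hi S h
lemma trace_conj (A B : Op n) :
    (Aᴴ * B).trace = starRingEnd ℂ ((Bᴴ * A).trace) := by
  simp only [Matrix.trace, Matrix.diag_apply, Matrix.mul_apply, Matrix.conjTranspose_apply,
    map_sum, _root_.map_mul, ← starRingEnd_apply, Complex.conj_conj]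
  exact Finset.sum_congr rfl fun x _ => Finset.sum_congr rfl fun y _ => mul_comm _ _

lemma eq_of_coeff (lam : Fin n → ℝ) {M N : Op n}
    (h : ∀ β, QCoeff lam M β = QCoeff lam N β) : M = N := by
  rw [qdual_expansion lam M, qdual_expansion lam N]
  exact Finset.sum_congr rfl fun β _ => by rw [h]

lemma coeff_adjoint {E Estar : SOp n} (h : IsHSAdjoint E Estar) (lam : Fin n → ℝ)
    (α β : Fin n → Fin 4) :
    QCoeff lam (Estar (Qdual lam α)) β
      = starRingEnd ℂ ((Qdual lam α * E (Qmat lam β)).trace) := by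
  have h1 := h (Qdual lam α) (Qmat lam β)
  rw [Qdual_herm] at h1
  have h2 : ((Estar (Qdual lam α))ᴴ * Qmat lam β).trace
      = starRingEnd ℂ (((Qmat lam β)ᴴ * Estar (Qdual lam α)).trace) := trace_conj _ _
  rw [Qmat_herm] at h2
  rw [QCoeff, ← Complex.conj_conj ((Qmat lam β * Estar (Qdual lam α)).trace)]
  rw [← h2, h1]

lemma wauli_zero (l : ℝ) : wauli l 0 = Wmat l := rfl

lemma D_Qmat (lam : Fin n → ℝ) (i : Fin n) (D : SOp n)
    (hD : ∀ ρ : Op n, D ρ = Matrix.of fun x y =>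
      (∑ b : Fin 2, ρ (Function.update x i b) (Function.update y i b)) *
        Wmat (lam i) (x i) (y i)) (β : Fin n → Fin 4) :
    D (Qmat lam β) = if β i = 0 then Qmat lam β else 0 := by
  ext x y
  rw [hD]
  simp only [Matrix.of_apply, Qmat]
  have hsum : (∑ b : Fin 2, ∏ j, wauli (lam j) (β j)
        (Function.update x i b j) (Function.update y i b j))
      = (∑ b : Fin 2, wauli (lam i) (β i) b b)
          * ∏ j ∈ {i}ᶜ, wauli (lam j) (β j) (x j) (y j) := by
    rw [Finset.sum_mul]
    refine Finset.sum_congr rfl fun b _ => ?_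
    rw [Fintype.prod_eq_mul_prod_compl i]
    simp only [Function.update_self]
    congr 1
    refine Finset.prod_congr rfl fun j hj => ?_
    have hji : j ≠ i := by simpa using hj
    rw [Function.update_of_ne hji, Function.update_of_ne hji]
  rw [hsum, wauli_diag_sum]
  by_cases hβi : β i = 0
  · rw [if_pos hβi, if_pos hβi, one_mul]
    simp only [Qmat, Matrix.of_apply]
    rw [Fintype.prod_eq_mul_prod_compl i (fun j => wauli (lam j) (β j) (x j) (y j))]
    rw [hβi, wauli_zero]
    ring
  · rw [if_neg hβi, if_neg hβi]
    simp

lemma edgeQubits_coe (e : Sym2 (Fin n)) :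
    (↑(edgeFinset' e) : Set (Fin n)) = edgeQubits e := by
  ext i; simp [edgeFinset', edgeQubits]

lemma edgeFinset'_card {G : SimpleGraph (Fin n)} {e : Sym2 (Fin n)}
    (he : e ∈ G.edgeSet) : (edgeFinset' e).card = 2 := by
  induction e with
  | _ a b =>
    have hab : a ≠ b := (G.mem_edgeSet.mp he).ne
    have : edgeFinset' (n := n) s(a, b) = {a, b} := by
      ext i; simp [edgeFinset', Sym2.mem_iff]
    rw [this, Finset.card_insert_of_notMem (by simpa using hab), Finset.card_singleton]

lemma adj_of_mem_edge {G : SimpleGraph (Fin n)} {e : Sym2 (Fin n)} {i j : Fin n}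
    (he : e ∈ G.edgeSet) (hi : i ∈ e) (hj : j ∈ e) (hij : i ≠ j) : G.Adj i j := by
  have : e = s(i, j) := (Sym2.mem_and_mem_iff hij).mp ⟨hi, hj⟩
  rw [this] at he
  exact G.mem_edgeSet.mp he
/-- the transition super-operator `T = E₁* ∘ (K*)⁻¹` maps
`S_k` into `S_{k+1}`, and expands supports by at most one step on the
graph. -/
theorem T_maps_Sk_to_Sk_succ {n : ℕ}
    (G : SimpleGraph (Fin n)) [DecidableRel G.Adj]
    (lam : Fin n → ℝ) (hlam : ∀ i, 0 ≤ lam i ∧ lam i < 1)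
    (p : Sym2 (Fin n) → ℝ) (hp0 : ∀ e, 0 ≤ p e)
    (hpsupp : ∀ e ∉ G.edgeSet, p e = 0)
    (hpsum : ∑ e ∈ G.edgeFinset, p e = 1)
    (q : Fin n → ℝ)
    (hqdef : ∀ i, q i = (1 / 2) * ∑ e ∈ G.edgeFinset.filter (fun e => i ∈ e), p e)
    (hqpos : ∀ i, 0 < q i)
    (D : Fin n → SOp n)
    (hD : ∀ i (ρ : Op n), D i ρ = Matrix.of fun x y =>
      (∑ b : Fin 2, ρ (Function.update x i b) (Function.update y i b)) *
        Wmat (lam i) (x i) (y i))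
    (F : Sym2 (Fin n) → SOp n)
    (hF : ∀ e ∈ G.edgeSet, IsChannelOn (edgeQubits e) (F e))
    (E0 : SOp n) (hE0 : ∀ ρ : Op n, E0 ρ = ∑ i, q i • D i ρ)
    (E1 : SOp n)
    (hE1 : ∀ ρ : Op n, E1 ρ = (∑ e ∈ G.edgeFinset, p e • F e ρ) - E0 ρ)
    (K : SOp n)
    (hK : ∀ ρ : Op n, K ρ = ρ - E0 ρ + ρ.trace • Qmat lam 0)
    (E1star Kstar KstarInv : SOp n)
    (hadj1 : IsHSAdjoint E1 E1star) (hadjK : IsHSAdjoint K Kstar)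
    (hinv1 : ∀ O : Op n, Kstar (KstarInv O) = O)
    (hinv2 : ∀ O : Op n, KstarInv (Kstar O) = O)
    (T : SOp n) (hT : ∀ O : Op n, T O = E1star (KstarInv O))
    (k : ℕ) (O : Op n) (hO : O ∈ Sk lam k) :
    T O ∈ Sk lam (k + 1) ∧
    suppOp (T O) ⊆ Ball G (suppOp O) 1 := by
  classical
  have hrsmul : ∀ (r : ℝ) (M : Op n), r • M = (r : ℂ) • M := by
    intro r M; ext x y; simp [Matrix.smul_apply, Complex.real_smul]
  -- total dissipation rate is 1
  have hqsum : ∑ i, q i = 1 := by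
    have h2 : ∀ e ∈ G.edgeFinset, (∑ i : Fin n, if i ∈ e then p e else 0) = 2 * p e := by
      intro e he
      rw [← Finset.sum_filter]
      rw [show (Finset.univ.filter (fun i => i ∈ e)) = edgeFinset' e from rfl]
      rw [Finset.sum_const, edgeFinset'_card (SimpleGraph.mem_edgeFinset.mp he),
        nsmul_eq_mul]
      norm_num
    have h1 : ∑ i, q i
        = (1/2) * ∑ i, ∑ e ∈ G.edgeFinset.filter (fun e => i ∈ e), p e := by
      rw [Finset.mul_sum]; exact Finset.sum_congr rfl fun i _ => hqdef i
    rw [h1]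
    simp only [Finset.sum_filter]
    rw [Finset.sum_comm]
    rw [Finset.sum_congr rfl h2, ← Finset.mul_sum, hpsum]
    norm_num
  set sfun : (Fin n → Fin 4) → ℝ :=
    fun α => ∑ i ∈ Finset.univ.filter (fun i => α i = 0), q i with hsfun
  set μ : (Fin n → Fin 4) → ℝ :=
    fun α => 1 - sfun α + (if α = 0 then 1 else 0) with hμdef
  have htr1 : ∀ α β : Fin n → Fin 4,
      (Qdual lam α * Qmat lam β).trace = if β = α then 1 else 0 := by
    intro α β; rw [Matrix.trace_mul_comm, Qmat_mul_Qdual_trace]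
  have hE0Q : ∀ β, E0 (Qmat lam β) = (sfun β : ℂ) • Qmat lam β := by
    intro β
    rw [hE0]
    have h1 : ∀ i : Fin n,
        q i • D i (Qmat lam β) = if β i = 0 then (q i : ℂ) • Qmat lam β else 0 := by
      intro i
      rw [D_Qmat lam i (D i) (hD i) β, hrsmul]
      split_ifs <;> simp
    rw [Finset.sum_congr rfl fun i _ => h1 i, Finset.sum_ite, Finset.sum_const_zero,
      add_zero, ← Finset.sum_smul]
    congr 1
    rw [hsfun]
    push_cast
    rfl
  -- Kstar is diagonal on the dual Wauli basis
  have hKsQ : ∀ α, Kstar (Qdual lam α) = ((μ α : ℝ) : ℂ) • Qdual lam α := by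
    intro α
    apply eq_of_coeff lam
    intro β
    rw [coeff_adjoint hadjK lam α β, QCoeff_smul, QCoeff_Qdual, hK, hE0Q, Qmat_trace]
    rw [Matrix.mul_add, Matrix.mul_sub, Matrix.trace_add, Matrix.trace_sub,
      Matrix.mul_smul, Matrix.trace_smul, Matrix.mul_smul, Matrix.trace_smul,
      htr1, htr1]
    simp only [hμdef]
    simp only [smul_eq_mul, map_add, map_sub, _root_.map_mul, _root_.map_one, _root_.map_zero,
      Complex.conj_ofReal, apply_ite (starRingEnd ℂ), Complex.ofReal_add,
      Complex.ofReal_sub, Complex.ofReal_one, Complex.ofReal_zero]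
    by_cases hβα : β = α
    · subst hβα
      by_cases hβ0 : β = 0
      · subst hβ0
        simp only [if_pos rfl]
        push_cast
        ring
      · have h0β : ¬(0 : Fin n → Fin 4) = β := fun h => hβ0 h.symm
        simp only [if_pos rfl, if_neg hβ0, if_neg h0β]
        push_cast
        ring
    · by_cases hβ0 : β = 0
      · subst hβ0
        have h0α : ¬(0 : Fin n → Fin 4) = α := hβα
        simp only [if_neg hβα, if_neg h0α, if_pos rfl]
        push_cast
        ring
      · simp only [if_neg hβα, if_neg hβ0]
        push_cast
        ring
  have hμpos : ∀ α, 0 < μ α := by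
    intro α
    simp only [hμdef]
    by_cases h0 : α = 0
    · subst h0
      have hs : sfun 0 = 1 := by
        simp only [hsfun]
        simpa using hqsum
      rw [if_pos rfl, hs]
      norm_num
    · have hex : ∃ i, α i ≠ 0 := by
        by_contra hc
        push_neg at hc
        exact h0 (funext fun i => hc i)
      obtain ⟨i0, hi0⟩ := hex
      have hsplit : sfun α + ∑ i ∈ Finset.univ.filter (fun i => ¬ α i = 0), q i = 1 := by
        simp only [hsfun]
        rw [Finset.sum_filter_add_sum_filter_not]
        exact hqsum
      have hpos : 0 < ∑ i ∈ Finset.univ.filter (fun i => ¬ α i = 0), q i :=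
        Finset.sum_pos (fun i _ => hqpos i) ⟨i0, by simp [hi0]⟩
      rw [if_neg h0, add_zero]
      linarith
  have hμne : ∀ α, ((μ α : ℝ) : ℂ) ≠ 0 := fun α => by
    exact_mod_cast (hμpos α).ne'
  have hKinvQ : ∀ α, KstarInv (Qdual lam α) = ((μ α : ℝ) : ℂ)⁻¹ • Qdual lam α := by
    intro α
    have h := hinv2 (((μ α : ℝ) : ℂ)⁻¹ • Qdual lam α)
    rw [_root_.map_smul, hKsQ, smul_smul, inv_mul_cancel₀ (hμne α), one_smul] at h
    exact h
  -- E1 paired against basis elements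
  have hE1val : ∀ α β : Fin n → Fin 4, (Qdual lam α * E1 (Qmat lam β)).trace
      = (∑ e ∈ G.edgeFinset, (p e : ℂ) * (Qdual lam α * F e (Qmat lam β)).trace)
        - (sfun β : ℂ) * (if β = α then 1 else 0) := by
    intro α β
    rw [hE1, Matrix.mul_sub, Matrix.trace_sub]
    congr 1
    · rw [Matrix.mul_sum, Matrix.trace_sum]
      refine Finset.sum_congr rfl fun e _ => ?_
      rw [hrsmul, Matrix.mul_smul, Matrix.trace_smul, smul_eq_mul]
    · rw [hE0Q, Matrix.mul_smul, Matrix.trace_smul, smul_eq_mul, htr1]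
  -- per-edge locality
  have hedge : ∀ e ∈ G.edgeFinset, ∀ α β : Fin n → Fin 4,
      (Qdual lam α * F e (Qmat lam β)).trace ≠ 0 →
      β = α ∨ ((∃ i, i ∈ edgeQubits e ∧ i ∈ suppStr α) ∧
        (↑(suppStr β) : Set (Fin n)) ⊆ ↑(suppStr α) ∪ edgeQubits e) := by
    intro e he α β ht
    have he' : e ∈ G.edgeSet := SimpleGraph.mem_edgeFinset.mp he
    obtain ⟨m, Fj, hFsupp, hFsum, hFact⟩ := hF e he'
    have hrw : (Qdual lam α * F e (Qmat lam β)).trace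
        = ((∑ j, (Fj j)ᴴ * Qdual lam α * Fj j) * Qmat lam β).trace := by
      rw [hFact, Matrix.mul_sum, Matrix.trace_sum, Matrix.sum_mul, Matrix.trace_sum]
      refine Finset.sum_congr rfl fun j _ => ?_
      rw [← mul_assoc, Matrix.trace_mul_comm]
      congr 1
      simp [mul_assoc]
    by_cases hdisj : ∃ i, i ∈ edgeQubits e ∧ i ∈ suppStr α
    · right
      refine ⟨hdisj, ?_⟩
      by_contra hns
      apply ht
      rw [hrw, Matrix.trace_mul_comm]
      exact supportedOn_coeff_eq_zero lam (supportedOn_sum fun j _ =>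
        (((hFsupp j).conjTranspose.mono Set.subset_union_right).mul
          ((supportedOn_Qdual lam α).mono Set.subset_union_left)).mul
          ((hFsupp j).mono Set.subset_union_right)) hns
    · left
      push_neg at hdisj
      have hcomm : ∀ j, (Fj j)ᴴ * Qdual lam α = Qdual lam α * (Fj j)ᴴ := fun j =>
        supportedOn_comm (hFsupp j).conjTranspose (supportedOn_Qdual lam α)
          (fun i hie hiα => hdisj i hie (by exact_mod_cast hiα))
      have hN : (∑ j, (Fj j)ᴴ * Qdual lam α * Fj j) = Qdual lam α := by
        calc ∑ j, (Fj j)ᴴ * Qdual lam α * Fj j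
            = ∑ j, Qdual lam α * ((Fj j)ᴴ * Fj j) := by
              refine Finset.sum_congr rfl fun j _ => ?_
              rw [hcomm, mul_assoc]
          _ = Qdual lam α * ∑ j, (Fj j)ᴴ * Fj j := by rw [Finset.mul_sum]
          _ = Qdual lam α := by rw [hFsum, mul_one]
      rw [hrw, hN, htr1] at ht
      by_contra hβα
      exact ht (if_neg hβα)
  -- coefficients of E1star on the dual basis
  have hE1coeff : ∀ α β : Fin n → Fin 4, QCoeff lam (E1star (Qdual lam α)) β ≠ 0 →
      β = α ∨ ∃ e ∈ G.edgeFinset, (∃ i, i ∈ edgeQubits e ∧ i ∈ suppStr α) ∧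
        (↑(suppStr β) : Set (Fin n)) ⊆ ↑(suppStr α) ∪ edgeQubits e := by
    intro α β hβ
    by_contra hcon
    push_neg at hcon
    obtain ⟨hβα, hno⟩ := hcon
    apply hβ
    rw [coeff_adjoint hadj1 lam α β, hE1val α β, if_neg hβα]
    have hz : ∀ e ∈ G.edgeFinset,
        (p e : ℂ) * (Qdual lam α * F e (Qmat lam β)).trace = 0 := by
      intro e he
      by_cases ht : (Qdual lam α * F e (Qmat lam β)).trace = 0
      · rw [ht, mul_zero]
      · rcases hedge e he α β ht with h1 | ⟨h2, h3⟩
        · exact absurd h1 hβα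
        · exact absurd h3 (hno e he h2)
    rw [Finset.sum_eq_zero hz]
    simp
  -- size and locality of the image of a basis element
  have hmain : ∀ α β : Fin n → Fin 4, QCoeff lam (E1star (Qdual lam α)) β ≠ 0 →
      (suppStr β).card ≤ (suppStr α).card + 1 ∧
      (↑(suppStr β) : Set (Fin n)) ⊆ Ball G (↑(suppStr α)) 1 := by
    intro α β hβ
    rcases hE1coeff α β hβ with rfl | ⟨e, he, ⟨i0, hi0e, hi0α⟩, hsub⟩
    · exact ⟨Nat.le_succ _, fun v hv => ⟨v, hv, SimpleGraph.Walk.nil, by simp⟩⟩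
    · have he' : e ∈ G.edgeSet := SimpleGraph.mem_edgeFinset.mp he
      have hi0e' : i0 ∈ edgeFinset' e := by
        simp only [edgeFinset', Finset.mem_filter, Finset.mem_univ, true_and]
        exact hi0e
      constructor
      · have hsubF : suppStr β ⊆ suppStr α ∪ edgeFinset' e := by
          intro j hj
          rcases hsub (by exact_mod_cast hj) with hj1 | hj2
          · exact Finset.mem_union_left _ (by exact_mod_cast hj1)
          · refine Finset.mem_union_right _ ?_
            simp only [edgeFinset', Finset.mem_filter, Finset.mem_univ, true_and]
            exact hj2
        have hsd : (edgeFinset' e \ suppStr α) ⊆ (edgeFinset' e).erase i0 := by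
          intro j hj
          rw [Finset.mem_sdiff] at hj
          refine Finset.mem_erase.mpr ⟨?_, hj.1⟩
          rintro rfl
          exact hj.2 hi0α
        have hsd2 : (edgeFinset' e \ suppStr α).card ≤ 1 := by
          refine le_trans (Finset.card_le_card hsd) ?_
          rw [Finset.card_erase_of_mem hi0e', edgeFinset'_card he']
        calc (suppStr β).card ≤ (suppStr α ∪ edgeFinset' e).card :=
              Finset.card_le_card hsubF
          _ = (suppStr α ∪ (edgeFinset' e \ suppStr α)).card := by
              rw [Finset.union_sdiff_self_eq_union]
          _ ≤ (suppStr α).card + (edgeFinset' e \ suppStr α).card :=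
              Finset.card_union_le _ _
          _ ≤ (suppStr α).card + 1 := by omega
      · intro v hv
        rcases hsub hv with hv1 | hv2
        · exact ⟨v, hv1, SimpleGraph.Walk.nil, by simp⟩
        · by_cases hvi : v = i0
          · subst hvi
            exact ⟨v, Finset.mem_coe.mpr hi0α, SimpleGraph.Walk.nil, by simp⟩
          · have hadj : G.Adj i0 v :=
              adj_of_mem_edge he' hi0e hv2 (fun h => hvi h.symm)
            exact ⟨i0, Finset.mem_coe.mpr hi0α,
              SimpleGraph.Walk.cons hadj SimpleGraph.Walk.nil, by simp⟩
  -- coefficients of O of weight > k vanish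
  have hOcard : ∀ α : Fin n → Fin 4, k < (suppStr α).card → QCoeff lam O α = 0 := by
    refine Submodule.span_induction
      (p := fun M _ => ∀ α : Fin n → Fin 4, k < (suppStr α).card → QCoeff lam M α = 0)
      ?_ ?_ ?_ ?_ hO
    · rintro M ⟨β, hβk, rfl⟩ α hα
      rw [QCoeff_Qdual, if_neg]
      rintro rfl
      omega
    · intro α _
      simp [QCoeff]
    · intro M N _ _ hM hN α hα
      rw [QCoeff_add, hM α hα, hN α hα, add_zero]
    · intro c M _ hM α hα
      rw [QCoeff_smul, hM α hα, mul_zero]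
  -- expansion of T O
  have hTO : T O = ∑ α : Fin n → Fin 4,
      (QCoeff lam O α * ((μ α : ℝ) : ℂ)⁻¹) • E1star (Qdual lam α) := by
    rw [hT]
    conv_lhs => rw [qdual_expansion lam O]
    rw [map_sum, map_sum]
    refine Finset.sum_congr rfl fun α _ => ?_
    rw [_root_.map_smul, hKinvQ, smul_smul, _root_.map_smul]
  constructor
  · -- membership in S_{k+1}
    rw [hTO]
    refine Submodule.sum_mem _ fun α _ => ?_
    by_cases hc : QCoeff lam O α = 0
    · rw [hc, zero_mul, zero_smul]
      exact zero_mem _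
    · refine Submodule.smul_mem _ _ ?_
      have hcard : (suppStr α).card ≤ k :=
        le_of_not_gt fun h => hc (hOcard α h)
      rw [qdual_expansion lam (E1star (Qdual lam α))]
      refine Submodule.sum_mem _ fun β _ => ?_
      by_cases hd : QCoeff lam (E1star (Qdual lam α)) β = 0
      · rw [hd, zero_smul]
        exact zero_mem _
      · refine Submodule.smul_mem _ _ (Submodule.subset_span ⟨β, ?_, rfl⟩)
        exact le_trans (hmain α β hd).1 (by omega)
  · -- support control
    have hsupp : SupportedOn (Ball G (suppOp O) 1) (T O) := by
      rw [hTO]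
      refine supportedOn_sum fun α _ => ?_
      by_cases hc : QCoeff lam O α = 0
      · rw [hc, zero_mul, zero_smul]
        exact supportedOn_zero
      · refine SupportedOn.smul ?_ _
        refine supportedOn_of_coeff lam fun β hβ => ?_
        refine (hmain α β hβ).2.trans ?_
        rintro v ⟨u, hu, w, hw⟩
        exact ⟨u, suppStr_subset_suppOp lam hc hu, w, hw⟩
    exact suppOp_subset hsupp

end

end SSP
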